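/- Let J ⊆ ℝ be an open interval and f : J → ℝ continuously differentiable with f(y)² < 1 for all y ∈ J. For i = 1, 2 let γᵢ = (xᵢ, yᵢ) : I → ℝ² be continuously differentiable curves on an interval I with xᵢ'(s)² + yᵢ'(s)² = 1, yᵢ'(s) > 0, yᵢ(s) ∈ J, and xᵢ'(s) = f(yᵢ(s)) for all s ∈ I. If y₁(s₀) = y₂(s₀) for some s₀ ∈ I, then y₁ = y₂ on all of I and x₁ − x₂ is constant on I; that is, γ₂ is obtained from γ₁ by a translation in the direction of the x-axis. (Any Euclidean unit-speed curve with non-constant height y is uniquely determined, up to x-translation, by its geometric linear momentum as a function of the distance y to the x-axis.) -/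
import Mathlib

open intervalIntegral Set

/-- If a function has zero derivative on an order-connected set, it is constant there. -/
lemma aux_const_of_deriv_zero {I : Set ℝ} (hI : I.OrdConnected) {h : ℝ → ℝ}
    (hd : ∀ s ∈ I, HasDerivAt h 0 s) {s₀ s : ℝ} (hs₀ : s₀ ∈ I) (hs : s ∈ I) :
    h s = h s₀ := by
  have key : ∀ a b : ℝ, a ∈ I → b ∈ I → a ≤ b → h b = h a := by
    intro a b ha hb hab
    have hsub : Icc a b ⊆ I := hI.out ha hb
    have hcont : ContinuousOn h (Icc a b) := fun t ht =>
      ((hd t (hsub ht)).continuousAt).continuousWithinAt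
    have := constant_of_has_deriv_right_zero hcont (fun t ht => by
      exact ((hd t (hsub (Ico_subset_Icc_self ht))).hasDerivWithinAt))
    exact this b (right_mem_Icc.2 hab)
  rcases le_total s₀ s with hle | hle
  · exact key s₀ s hs₀ hs hle
  · exact (key s s₀ hs hs₀ hle).symm

/-- A Euclidean unit-speed curve with non-constant height `y`
(`y' > 0`) is uniquely determined, up to translation in the `x`-direction, by
its geometric linear momentum `𝒦 = x'` as a function `f` of the distance `y`
to the `x`-axis. -/
theorem euclidean_curve_determined_by_momentum
    (J : Set ℝ) (hJopen : IsOpen J) (hJconn : J.OrdConnected)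
    (f : ℝ → ℝ) (hf : ContDiffOn ℝ 1 f J)
    (hf1 : ∀ y ∈ J, f y ^ 2 < 1)
    (I : Set ℝ) (hIconn : I.OrdConnected)
    (x₁ y₁ x₁' y₁' x₂ y₂ x₂' y₂' : ℝ → ℝ)
    (hx₁ : ∀ s ∈ I, HasDerivAt x₁ (x₁' s) s)
    (hy₁ : ∀ s ∈ I, HasDerivAt y₁ (y₁' s) s)
    (hx₂ : ∀ s ∈ I, HasDerivAt x₂ (x₂' s) s)
    (hy₂ : ∀ s ∈ I, HasDerivAt y₂ (y₂' s) s)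
    (hcx₁ : ContinuousOn x₁' I) (hcy₁ : ContinuousOn y₁' I)
    (hcx₂ : ContinuousOn x₂' I) (hcy₂ : ContinuousOn y₂' I)
    (hunit₁ : ∀ s ∈ I, x₁' s ^ 2 + y₁' s ^ 2 = 1)
    (hunit₂ : ∀ s ∈ I, x₂' s ^ 2 + y₂' s ^ 2 = 1)
    (hpos₁ : ∀ s ∈ I, 0 < y₁' s)
    (hpos₂ : ∀ s ∈ I, 0 < y₂' s)
    (hmem₁ : ∀ s ∈ I, y₁ s ∈ J)
    (hmem₂ : ∀ s ∈ I, y₂ s ∈ J)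
    (hmom₁ : ∀ s ∈ I, x₁' s = f (y₁ s))
    (hmom₂ : ∀ s ∈ I, x₂' s = f (y₂ s))
    (s₀ : ℝ) (hs₀ : s₀ ∈ I) (heq : y₁ s₀ = y₂ s₀) :
    (∀ s ∈ I, y₁ s = y₂ s) ∧ ∃ d : ℝ, ∀ s ∈ I, x₁ s - x₂ s = d := by
  -- the "speed" function g(y) = √(1 - f(y)²)
  set g : ℝ → ℝ := fun y => Real.sqrt (1 - f y ^ 2) with hg
  have hfc : ContinuousOn f J := hf.continuousOn
  have hgc : ContinuousOn (fun y => (g y)⁻¹) J := by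
    apply ContinuousOn.inv₀
    · exact Real.continuous_sqrt.comp_continuousOn
        (continuousOn_const.sub (hfc.pow 2))
    · intro y hy
      exact ne_of_gt (Real.sqrt_pos.2 (by linarith [hf1 y hy]))
  have hgpos : ∀ y ∈ J, 0 < g y := fun y hy =>
    Real.sqrt_pos.2 (by linarith [hf1 y hy])
  -- antiderivative of 1/g on J
  set y₀ : ℝ := y₁ s₀ with hy₀
  have hy₀J : y₀ ∈ J := hmem₁ s₀ hs₀
  set F : ℝ → ℝ := fun y => ∫ t in y₀..y, (g t)⁻¹ with hF
  have hFd : ∀ y ∈ J, HasDerivAt F ((g y)⁻¹) y := by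
    intro y hy
    have hsub : uIcc y₀ y ⊆ J := hJconn.uIcc_subset hy₀J hy
    have hint : IntervalIntegrable (fun t => (g t)⁻¹) MeasureTheory.volume y₀ y :=
      (hgc.mono hsub).intervalIntegrable
    have hmeas := ContinuousOn.stronglyMeasurableAtFilter
      (μ := MeasureTheory.volume) hJopen hgc y hy
    have hca : ContinuousAt (fun t => (g t)⁻¹) y :=
      hgc.continuousAt (hJopen.mem_nhds hy)
    exact intervalIntegral.integral_hasDerivAt_right hint hmeas hca
  -- F is strictly monotone on J
  have hJconv : Convex ℝ J := hJconn.convex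
  have hFmono : StrictMonoOn F J := by
    apply strictMonoOn_of_deriv_pos hJconv
    · exact fun y hy => ((hFd y hy).continuousAt).continuousWithinAt
    · intro y hy
      rw [hJopen.interior_eq] at hy
      rw [(hFd y hy).deriv]
      exact inv_pos.2 (hgpos y hy)
  -- y' = g ∘ y for both curves
  have hyg₁ : ∀ s ∈ I, y₁' s = g (y₁ s) := by
    intro s hs
    have h1 : y₁' s ^ 2 = 1 - f (y₁ s) ^ 2 := by
      rw [← hmom₁ s hs]; linarith [hunit₁ s hs]
    rw [hg]; simp only
    rw [← h1, Real.sqrt_sq (le_of_lt (hpos₁ s hs))]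
  have hyg₂ : ∀ s ∈ I, y₂' s = g (y₂ s) := by
    intro s hs
    have h1 : y₂' s ^ 2 = 1 - f (y₂ s) ^ 2 := by
      rw [← hmom₂ s hs]; linarith [hunit₂ s hs]
    rw [hg]; simp only
    rw [← h1, Real.sqrt_sq (le_of_lt (hpos₂ s hs))]
  -- F ∘ yᵢ has derivative 1
  have hφ : ∀ s ∈ I, HasDerivAt (fun t => F (y₁ t) - F (y₂ t)) 0 s := by
    intro s hs
    have h1 : HasDerivAt (fun t => F (y₁ t)) ((g (y₁ s))⁻¹ * y₁' s) s :=
      (hFd (y₁ s) (hmem₁ s hs)).comp s (hy₁ s hs)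
    have h2 : HasDerivAt (fun t => F (y₂ t)) ((g (y₂ s))⁻¹ * y₂' s) s :=
      (hFd (y₂ s) (hmem₂ s hs)).comp s (hy₂ s hs)
    have e1 : (g (y₁ s))⁻¹ * y₁' s = 1 := by
      rw [hyg₁ s hs]
      exact inv_mul_cancel₀ (ne_of_gt (hgpos _ (hmem₁ s hs)))
    have e2 : (g (y₂ s))⁻¹ * y₂' s = 1 := by
      rw [hyg₂ s hs]
      exact inv_mul_cancel₀ (ne_of_gt (hgpos _ (hmem₂ s hs)))
    have := h1.sub h2
    rw [e1, e2, sub_self] at this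
    exact this
  -- conclude y₁ = y₂
  have hyeq : ∀ s ∈ I, y₁ s = y₂ s := by
    intro s hs
    have hc := aux_const_of_deriv_zero hIconn hφ hs₀ hs
    have h0 : F (y₁ s₀) - F (y₂ s₀) = 0 := by
      rw [show y₂ s₀ = y₁ s₀ from heq.symm, sub_self]
    have : F (y₁ s) = F (y₂ s) := by
      have := hc.trans h0; linarith
    exact hFmono.injOn (hmem₁ s hs) (hmem₂ s hs) this
  refine ⟨hyeq, x₁ s₀ - x₂ s₀, fun s hs => ?_⟩
  have hxd : ∀ s ∈ I, HasDerivAt (fun t => x₁ t - x₂ t) 0 s := by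
    intro s hs
    have := (hx₁ s hs).sub (hx₂ s hs)
    have e : x₁' s - x₂' s = 0 := by
      rw [hmom₁ s hs, hmom₂ s hs, hyeq s hs, sub_self]
    rwa [e] at this
  exact aux_const_of_deriv_zero hIconn hxd hs₀ hs
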